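/- For all θ, θ′ ∈ (0, π) with θ ≠ θ′, the partial sums Σ_{n=1}^K (2/n) cos(nθ) cos(nθ′) converge as K → ∞, and their limit equals −log( |e^{iθ} − e^{iθ′}| · |e^{iθ} − e^{−iθ′}| ). -/

import Mathlib

open Filter Finset Complex

lemma cosLtOne {x : ℝ} (hx0 : 0 < x) (hx2 : x < 2 * Real.pi) : Real.cos x < 1 := by
  refine lt_of_le_of_ne (Real.cos_le_one x) ?_
  intro h
  have := (Real.cos_eq_one_iff_of_lt_of_lt (by linarith [Real.pi_pos]) hx2).mp h
  linarith

lemma expINeOne {x : ℝ} (hx0 : 0 < x) (hx2 : x < 2 * Real.pi) :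
    Complex.exp (x * Complex.I) ≠ 1 := by
  intro h
  have hre : (Complex.exp (x * Complex.I)).re = 1 := by rw [h]; simp
  rw [Complex.exp_ofReal_mul_I_re] at hre
  exact absurd hre (ne_of_lt (cosLtOne hx0 hx2))

lemma cos_series_limit {x : ℝ} (hx0 : 0 < x) (hx2 : x < 2 * Real.pi) :
    Tendsto (fun K : ℕ => ∑ n ∈ range K, Real.cos (((n : ℝ) + 1) * x) / ((n : ℝ) + 1))
      atTop (nhds (- Real.log (‖1 - Complex.exp (x * Complex.I)‖))) := by
  set z : ℂ := Complex.exp (x * Complex.I) with hzdef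
  have hz1 : z ≠ 1 := expINeOne hx0 hx2
  have hzn : ‖z‖ = 1 := by
    rw [hzdef, Complex.norm_exp_ofReal_mul_I]
  have h1z : (1 : ℂ) - z ≠ 0 := sub_ne_zero.mpr (Ne.symm hz1)
  -- boundedness of geometric partial sums
  have hb : ∀ n : ℕ, ‖∑ i ∈ range n, z ^ (i + 1)‖ ≤ 2 / ‖(1 : ℂ) - z‖ := by
    intro n
    have hgs : ∑ i ∈ range n, z ^ (i + 1) = z * ((z ^ n - 1) / (z - 1)) := by
      rw [← geom_sum_eq hz1, Finset.mul_sum]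
      exact Finset.sum_congr rfl fun i _ => by ring
    rw [hgs, norm_mul, hzn, one_mul, norm_div, norm_sub_rev (z : ℂ) 1]
    have hpos : 0 < ‖(1 : ℂ) - z‖ := norm_pos_iff.mpr h1z
    rw [div_le_div_iff_of_pos_right hpos]
    calc ‖z ^ n - 1‖ ≤ ‖z ^ n‖ + ‖(1 : ℂ)‖ := norm_sub_le _ _
      _ = 2 := by rw [norm_pow, hzn, one_pow, norm_one]; norm_num
  -- convergence of the complex series
  have hcauchy : CauchySeq (fun K : ℕ => ∑ n ∈ range K,
      (fun n : ℕ => 1 / ((n : ℝ) + 1)) n • z ^ (n + 1)) := by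
    apply Antitone.cauchySeq_series_mul_of_tendsto_zero_of_bounded
    · intro a b hab
      have hab' : (a : ℝ) ≤ b := Nat.cast_le.mpr hab
      exact one_div_le_one_div_of_le (by positivity) (by linarith)
    · exact tendsto_one_div_add_atTop_nhds_zero_nat
    · exact hb
  obtain ⟨l, hl⟩ := cauchySeq_tendsto_of_complete hcauchy
  have hl' : Tendsto (fun K : ℕ => ∑ n ∈ range K, z ^ (n + 1) / ((n : ℂ) + 1)) atTop (nhds l) := by
    refine hl.congr fun K => Finset.sum_congr rfl fun n _ => ?_
    rw [Complex.real_smul]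
    push_cast
    field_simp
  -- Abel's limit theorem
  have habel := Complex.tendsto_tsum_powerSeries_nhdsWithin_lt
    (f := fun n : ℕ => z ^ (n + 1) / ((n : ℂ) + 1)) hl'
  rw [tendsto_map'_iff] at habel
  have heq : ∀ᶠ r : ℝ in nhdsWithin 1 (Set.Iio 1),
      ((fun w : ℂ => ∑' n : ℕ, z ^ (n + 1) / ((n : ℂ) + 1) * w ^ n) ∘ Complex.ofReal) r
        = - Complex.log (1 - (r : ℂ) * z) / (r : ℂ) := by
    filter_upwards [self_mem_nhdsWithin,
      eventually_nhdsWithin_of_eventually_nhds (eventually_gt_nhds (by norm_num : (0:ℝ) < 1))]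
      with r hr1 hr0
    have hr0' : (r : ℂ) ≠ 0 := by exact_mod_cast ne_of_gt hr0
    have hrz : ‖(r : ℂ) * z‖ < 1 := by
      rw [norm_mul, hzn, mul_one, Complex.norm_real, Real.norm_eq_abs, abs_of_pos hr0]
      exact hr1
    have hs := Complex.hasSum_taylorSeries_neg_log hrz
    have hs1 : HasSum (fun n : ℕ => ((r : ℂ) * z) ^ (n + 1) / ((n : ℕ) + 1 : ℂ))
        (- Complex.log (1 - (r : ℂ) * z)) := by
      have := (hasSum_nat_add_iff' (f := fun n : ℕ => ((r : ℂ) * z) ^ n / (n : ℂ)) 1).mpr hs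
      simpa using this
    have hs2 := hs1.div_const (r : ℂ)
    have hfun : (fun n : ℕ => ((r : ℂ) * z) ^ (n + 1) / ((n : ℕ) + 1 : ℂ) / (r : ℂ))
        = fun n : ℕ => z ^ (n + 1) / ((n : ℂ) + 1) * (r : ℂ) ^ n := by
      funext n
      rw [mul_pow]
      have h1 : ((n : ℂ) + 1) ≠ 0 := by
        have h2 : ((n + 1 : ℕ) : ℂ) ≠ 0 := Nat.cast_ne_zero.mpr (Nat.succ_ne_zero n)
        push_cast at h2
        exact h2
      field_simp
      ring
    rw [hfun] at hs2
    simpa using hs2.tsum_eq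
  have hlog : Tendsto (fun r : ℝ => - Complex.log (1 - (r : ℂ) * z) / (r : ℂ))
      (nhdsWithin 1 (Set.Iio 1)) (nhds (- Complex.log (1 - z))) := by
    have hcont : ContinuousAt Complex.log (1 - z) := by
      apply continuousAt_clog
      rw [Complex.mem_slitPlane_iff]
      left
      have : z.re < 1 := by
        rw [hzdef, Complex.exp_ofReal_mul_I_re]
        exact cosLtOne hx0 hx2
      simp only [Complex.sub_re, Complex.one_re]
      linarith
    have h1 : Tendsto (fun r : ℝ => (1 : ℂ) - (r : ℂ) * z) (nhdsWithin 1 (Set.Iio 1))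
        (nhds (1 - z)) := by
      have h3' : Tendsto (fun r : ℝ => (r : ℂ)) (nhdsWithin 1 (Set.Iio 1)) (nhds 1) := by
        have := (Complex.continuous_ofReal.tendsto (1 : ℝ)).mono_left
          (nhdsWithin_le_nhds (s := Set.Iio (1 : ℝ)))
        simpa using this
      simpa using (tendsto_const_nhds.sub (h3'.mul tendsto_const_nhds))
    have h3 : Tendsto (fun r : ℝ => (r : ℂ)) (nhdsWithin 1 (Set.Iio 1)) (nhds 1) := by
      have := (Complex.continuous_ofReal.tendsto (1 : ℝ)).mono_left
        (nhdsWithin_le_nhds (s := Set.Iio (1 : ℝ)))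
      simpa using this
    have := ((hcont.tendsto.comp h1).neg.div h3 one_ne_zero)
    simpa [Pi.div_def] using this
  have hll : l = - Complex.log (1 - z) :=
    tendsto_nhds_unique (habel.congr' heq) hlog
  rw [hll] at hl'
  have hre := (Complex.continuous_re.tendsto _).comp hl'
  have hre' : Tendsto (fun K : ℕ => ∑ n ∈ range K, Real.cos (((n : ℝ) + 1) * x) / ((n : ℝ) + 1))
      atTop (nhds ((- Complex.log (1 - z)).re)) := by
    refine hre.congr fun K => ?_
    simp only [Function.comp_apply, Complex.re_sum]
    refine Finset.sum_congr rfl fun n _ => ?_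
    have hzp : z ^ (n + 1) = Complex.exp (((((n : ℝ) + 1) * x : ℝ)) * Complex.I) := by
      rw [hzdef, ← Complex.exp_nat_mul]
      congr 1
      push_cast
      ring
    have hc : ((n : ℂ) + 1) = ((((n : ℝ) + 1) : ℝ) : ℂ) := by push_cast; ring
    rw [hzp, hc, div_eq_mul_inv, ← Complex.ofReal_inv, mul_comm,
      Complex.re_ofReal_mul, Complex.exp_ofReal_mul_I_re]
    rw [inv_mul_eq_div]
  have : (- Complex.log (1 - z)).re = - Real.log (‖1 - z‖) := by
    rw [Complex.neg_re, Complex.log_re]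
  rw [this] at hre'
  exact hre'
lemma abs_one_sub_exp_abs (d : ℝ) :
    ‖1 - Complex.exp ((|d| : ℝ) * Complex.I)‖
      = ‖1 - Complex.exp ((d : ℝ) * Complex.I)‖ := by
  rcases abs_cases d with ⟨h, _⟩ | ⟨h, _⟩
  · rw [h]
  · rw [h]
    have hconj : Complex.exp ((-d : ℝ) * Complex.I)
        = (starRingEnd ℂ) (Complex.exp ((d : ℝ) * Complex.I)) := by
      rw [← Complex.exp_conj]
      congr 1
      simp [Complex.conj_I]
    rw [hconj, ← Complex.norm_conj (1 - (starRingEnd ℂ) (Complex.exp ((d : ℝ) * Complex.I)))]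
    congr 1
    simp

/-- Covariance Fourier identity for the Gaussian field on the half-circle:
`Σ_{n≥1} (2/n) cos(nθ) cos(nθ′) = −log(|e^{iθ}−e^{iθ′}|·|e^{iθ}−e^{−iθ′}|)`
for `θ ≠ θ′` in `(0, π)`, as a limit of partial sums. -/
theorem halfCircle_covariance_series (θ θ' : ℝ)
    (hθ : θ ∈ Set.Ioo 0 Real.pi) (hθ' : θ' ∈ Set.Ioo 0 Real.pi) (hne : θ ≠ θ') :
    Filter.Tendsto
      (fun K : ℕ => ∑ n ∈ Finset.range K,
        (2 / ((n : ℝ) + 1)) * Real.cos (((n : ℝ) + 1) * θ) * Real.cos (((n : ℝ) + 1) * θ'))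
      Filter.atTop
      (nhds (- Real.log
        (‖Complex.exp (θ * Complex.I) - Complex.exp (θ' * Complex.I)‖ *
         ‖Complex.exp (θ * Complex.I) - Complex.exp (-θ' * Complex.I)‖))) := by
  obtain ⟨hθ0, hθπ⟩ := hθ
  obtain ⟨hθ'0, hθ'π⟩ := hθ'
  have hpi := Real.pi_pos
  set u : ℝ := |θ - θ'| with hu
  have hu0 : 0 < u := abs_pos.mpr (sub_ne_zero.mpr hne)
  have hu2 : u < 2 * Real.pi := by
    rcases abs_cases (θ - θ') with ⟨h, _⟩ | ⟨h, _⟩ <;> rw [hu, h] <;> linarith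
  set v : ℝ := θ + θ' with hv
  have hv0 : 0 < v := by linarith
  have hv2 : v < 2 * Real.pi := by linarith
  -- the two factor identities
  have habs1 : ‖1 - Complex.exp ((u : ℝ) * Complex.I)‖
      = ‖Complex.exp (θ * Complex.I) - Complex.exp (θ' * Complex.I)‖ := by
    rw [hu, abs_one_sub_exp_abs (θ - θ')]
    have hfac : Complex.exp (θ * Complex.I) - Complex.exp (θ' * Complex.I)
        = Complex.exp (θ' * Complex.I) * (Complex.exp (((θ - θ' : ℝ)) * Complex.I) - 1) := by
      rw [mul_sub, ← Complex.exp_add, mul_one]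
      push_cast
      ring_nf
    rw [hfac, norm_mul, Complex.norm_exp_ofReal_mul_I, one_mul,
      norm_sub_rev]
  have habs2 : ‖1 - Complex.exp ((v : ℝ) * Complex.I)‖
      = ‖Complex.exp (θ * Complex.I) - Complex.exp (-θ' * Complex.I)‖ := by
    have hfac : Complex.exp (θ * Complex.I) - Complex.exp (-θ' * Complex.I)
        = Complex.exp ((-θ' : ℝ) * Complex.I) * (Complex.exp (((θ + θ' : ℝ)) * Complex.I) - 1) := by
      rw [mul_sub, ← Complex.exp_add, mul_one]
      push_cast
      ring_nf
    rw [hv, hfac, norm_mul, Complex.norm_exp_ofReal_mul_I, one_mul, norm_sub_rev]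
  have hA0 : ‖Complex.exp (θ * Complex.I) - Complex.exp (θ' * Complex.I)‖ ≠ 0 := by
    rw [← habs1]
    exact norm_ne_zero_iff.mpr (sub_ne_zero.mpr (Ne.symm (expINeOne hu0 hu2)))
  have hB0 : ‖Complex.exp (θ * Complex.I) - Complex.exp (-θ' * Complex.I)‖ ≠ 0 := by
    rw [← habs2]
    exact norm_ne_zero_iff.mpr (sub_ne_zero.mpr (Ne.symm (expINeOne hv0 hv2)))
  have h1 := cos_series_limit hu0 hu2
  have h2 := cos_series_limit hv0 hv2
  have hsum := h1.add h2
  rw [habs1] at hsum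
  rw [habs2] at hsum
  have hlim : - Real.log
        (‖Complex.exp (θ * Complex.I) - Complex.exp (θ' * Complex.I)‖ *
         ‖Complex.exp (θ * Complex.I) - Complex.exp (-θ' * Complex.I)‖)
      = - Real.log (‖Complex.exp (θ * Complex.I) - Complex.exp (θ' * Complex.I)‖)
        + - Real.log (‖Complex.exp (θ * Complex.I) - Complex.exp (-θ' * Complex.I)‖) := by
    rw [Real.log_mul hA0 hB0]
    ring
  rw [hlim]
  refine hsum.congr fun K => ?_
  rw [← Finset.sum_add_distrib]
  refine Finset.sum_congr rfl fun n _ => ?_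
  have hcu : Real.cos (((n : ℝ) + 1) * u) = Real.cos (((n : ℝ) + 1) * (θ - θ')) := by
    rw [hu, show ((n : ℝ) + 1) * |θ - θ'| = |((n : ℝ) + 1) * (θ - θ')| by
      rw [abs_mul, abs_of_pos (by positivity : (0:ℝ) < (n : ℝ) + 1)], Real.cos_abs]
  rw [hcu, hv, mul_sub, mul_add, Real.cos_sub, Real.cos_add]
  ring
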